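/- Let X be a set and let C be a set function on the subsets of X with values in [0,∞] which is monotone (A ⊆ B implies C(A) ≤ C(B)) and finitely subadditive (C(A ∪ B) ≤ C(A) + C(B) for all A, B ⊆ X). Then for every real p ≥ 1 and all functions f, g : X → ℝ, the quasi-triangle inequality ‖f + g‖_{L^p(X,C)} ≤ 2 (‖f‖_{L^p(X,C)} + ‖g‖_{L^p(X,C)}) holds. -/

import Mathlib

open MeasureTheory Set

/-- The Choquet integral of `f : X → ℝ≥0∞` with respect to a set function
`C : Set X → ℝ≥0∞`: `∫_X f dC = ∫₀^∞ C({x | f x ≥ t}) dt`. -/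
noncomputable def choquetIntegral {X : Type*} (C : Set X → ENNReal) (f : X → ENNReal) : ENNReal :=
  ∫⁻ t in Set.Ioi (0 : ℝ), C {x | ENNReal.ofReal t ≤ f x}

/-- The Choquet `L^p` seminorm of a real-valued function `f : X → ℝ`:
`‖f‖_{L^p(X,C)} = (∫_X |f|^p dC)^(1/p)`. -/
noncomputable def choquetLpNorm {X : Type*} (C : Set X → ENNReal) (f : X → ℝ) (p : ℝ) :
    ENNReal :=
  (choquetIntegral C (fun x => ENNReal.ofReal |f x| ^ p)) ^ (1 / p)

lemma lintegral_Ioi_div {F : ℝ → ENNReal} (hF : Measurable F) {c : ℝ} (hc : 0 < c) :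
    ∫⁻ t in Set.Ioi (0 : ℝ), F (t / c) = ENNReal.ofReal c * ∫⁻ t in Set.Ioi (0 : ℝ), F t := by
  have hcinv : (c : ℝ)⁻¹ ≠ 0 := inv_ne_zero hc.ne'
  have hG : Measurable ((Set.Ioi (0:ℝ)).indicator F) := hF.indicator measurableSet_Ioi
  have key : ∀ t : ℝ, (Set.Ioi (0:ℝ)).indicator (fun t => F (c⁻¹ * t)) t
      = (Set.Ioi (0:ℝ)).indicator F (c⁻¹ * t) := by
    intro t
    by_cases ht : t ∈ Set.Ioi (0:ℝ)
    · rw [Set.indicator_of_mem ht, Set.indicator_of_mem (by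
        simpa using mul_pos (inv_pos.2 hc) ht)]
    · rw [Set.indicator_of_notMem ht, Set.indicator_of_notMem (by
        simp only [Set.mem_Ioi, not_lt] at ht ⊢
        exact mul_nonpos_of_nonneg_of_nonpos (inv_pos.2 hc).le ht)]
  calc ∫⁻ t in Set.Ioi (0:ℝ), F (t / c)
      = ∫⁻ t, (Set.Ioi (0:ℝ)).indicator (fun t => F (c⁻¹ * t)) t := by
        rw [lintegral_indicator measurableSet_Ioi]
        simp_rw [div_eq_inv_mul]
    _ = ∫⁻ t, (Set.Ioi (0:ℝ)).indicator F (c⁻¹ * t) := by simp_rw [key]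
    _ = ∫⁻ t, (Set.Ioi (0:ℝ)).indicator F t ∂(Measure.map (c⁻¹ * ·) volume) :=
        (lintegral_map hG (measurable_const_mul _)).symm
    _ = ENNReal.ofReal c * ∫⁻ t in Set.Ioi (0:ℝ), F t := by
        rw [Real.map_volume_mul_left hcinv, lintegral_smul_measure,
          lintegral_indicator measurableSet_Ioi, inv_inv, abs_of_pos hc, smul_eq_mul]

/-- Quasi-triangle inequality for the Choquet `L^p` seminorm: if `C` is monotone and
finitely subadditive, then `‖f + g‖_{L^p(X,C)} ≤ 2 (‖f‖_{L^p(X,C)} + ‖g‖_{L^p(X,C)})`. -/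
theorem choquetLpNorm_add_le {X : Type*} (C : Set X → ENNReal)
    (hC_mono : ∀ A B : Set X, A ⊆ B → C A ≤ C B)
    (hC_subadd : ∀ A B : Set X, C (A ∪ B) ≤ C A + C B)
    (p : ℝ) (hp : 1 ≤ p) (f g : X → ℝ) :
    choquetLpNorm C (fun x => f x + g x) p ≤
      2 * (choquetLpNorm C f p + choquetLpNorm C g p) := by
  have hp0 : 0 < p := lt_of_lt_of_le one_pos hp
  have hc : (0:ℝ) < 2 ^ p := Real.rpow_pos_of_pos two_pos p
  -- level functions are antitone, hence measurable
  have level_meas : ∀ h : X → ℝ,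
      Measurable (fun t : ℝ => C {x | ENNReal.ofReal t ≤ ENNReal.ofReal |h x| ^ p}) := by
    intro h
    apply Antitone.measurable
    intro s t hst
    exact hC_mono _ _ fun x hx => le_trans (ENNReal.ofReal_le_ofReal hst) hx
  -- level set inclusion
  have incl : ∀ t : ℝ,
      {x | ENNReal.ofReal t ≤ ENNReal.ofReal |f x + g x| ^ p} ⊆
        {x | ENNReal.ofReal (t / 2 ^ p) ≤ ENNReal.ofReal |f x| ^ p} ∪
        {x | ENNReal.ofReal (t / 2 ^ p) ≤ ENNReal.ofReal |g x| ^ p} := by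
    intro t x hx
    simp only [Set.mem_setOf_eq] at hx
    rw [ENNReal.ofReal_rpow_of_nonneg (abs_nonneg _) hp0.le,
      ENNReal.ofReal_le_ofReal_iff (Real.rpow_nonneg (abs_nonneg _) p)] at hx
    have hmax : |f x + g x| ^ p ≤ 2 ^ p * max (|f x|) (|g x|) ^ p := by
      rw [← Real.mul_rpow (by norm_num) (le_max_iff.2 (Or.inl (abs_nonneg _)))]
      apply Real.rpow_le_rpow (abs_nonneg _) _ hp0.le
      calc |f x + g x| ≤ |f x| + |g x| := abs_add_le _ _
        _ ≤ 2 * max (|f x|) (|g x|) := by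
            rw [two_mul]
            exact add_le_add (le_max_left _ _) (le_max_right _ _)
    have ht : t / 2 ^ p ≤ max (|f x|) (|g x|) ^ p := by
      rw [div_le_iff₀ hc, mul_comm]
      exact hx.trans hmax
    rcases max_cases (|f x|) (|g x|) with ⟨hm, _⟩ | ⟨hm, _⟩
    · left
      rw [Set.mem_setOf_eq, ENNReal.ofReal_rpow_of_nonneg (abs_nonneg _) hp0.le]
      exact ENNReal.ofReal_le_ofReal (by rw [hm] at ht; exact ht)
    · right
      rw [Set.mem_setOf_eq, ENNReal.ofReal_rpow_of_nonneg (abs_nonneg _) hp0.le]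
      exact ENNReal.ofReal_le_ofReal (by rw [hm] at ht; exact ht)
  -- main integral bound
  have hmeasF : Measurable (fun t : ℝ =>
      C {x | ENNReal.ofReal (t / 2 ^ p) ≤ ENNReal.ofReal |f x| ^ p}) :=
    (level_meas f).comp (measurable_id.div_const _)
  have hbound : choquetIntegral C (fun x => ENNReal.ofReal |f x + g x| ^ p) ≤
      ENNReal.ofReal (2 ^ p) *
        (choquetIntegral C (fun x => ENNReal.ofReal |f x| ^ p) +
         choquetIntegral C (fun x => ENNReal.ofReal |g x| ^ p)) := by
    calc choquetIntegral C (fun x => ENNReal.ofReal |f x + g x| ^ p)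
        ≤ ∫⁻ t in Set.Ioi (0:ℝ),
            (C {x | ENNReal.ofReal (t / 2 ^ p) ≤ ENNReal.ofReal |f x| ^ p} +
             C {x | ENNReal.ofReal (t / 2 ^ p) ≤ ENNReal.ofReal |g x| ^ p}) := by
          refine lintegral_mono fun t => ?_
          exact le_trans (hC_mono _ _ (incl t)) (hC_subadd _ _)
      _ = (∫⁻ t in Set.Ioi (0:ℝ),
            C {x | ENNReal.ofReal (t / 2 ^ p) ≤ ENNReal.ofReal |f x| ^ p}) +
          ∫⁻ t in Set.Ioi (0:ℝ),
            C {x | ENNReal.ofReal (t / 2 ^ p) ≤ ENNReal.ofReal |g x| ^ p} :=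
          lintegral_add_left hmeasF _
      _ = ENNReal.ofReal (2 ^ p) *
            (choquetIntegral C (fun x => ENNReal.ofReal |f x| ^ p) +
             choquetIntegral C (fun x => ENNReal.ofReal |g x| ^ p)) := by
          rw [lintegral_Ioi_div (level_meas f) hc, lintegral_Ioi_div (level_meas g) hc,
            mul_add]
          rfl
  -- conclude with rpow algebra
  unfold choquetLpNorm
  set A := choquetIntegral C (fun x => ENNReal.ofReal |f x| ^ p)
  set B := choquetIntegral C (fun x => ENNReal.ofReal |g x| ^ p)
  calc choquetIntegral C (fun x => ENNReal.ofReal |(fun x => f x + g x) x| ^ p) ^ (1 / p)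
      ≤ (ENNReal.ofReal (2 ^ p) * (A + B)) ^ (1 / p) :=
        ENNReal.rpow_le_rpow hbound (by positivity)
    _ = 2 * (A + B) ^ (1 / p) := by
        rw [ENNReal.mul_rpow_of_nonneg _ _ (by positivity),
          ← ENNReal.ofReal_rpow_of_pos two_pos, ← ENNReal.rpow_mul,
          mul_one_div, div_self hp0.ne', ENNReal.rpow_one]
        norm_num
    _ ≤ 2 * (A ^ (1 / p) + B ^ (1 / p)) := by
        gcongr
        exact ENNReal.rpow_add_le_add_rpow A B (by positivity)
          (by rw [div_le_one hp0]; exact hp)
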